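/- Suppose that on U the following four first-order equations hold: Θ¹_y = −L_y + 2M_x + H·M − (1/2)L² + M·Θ⁰ + (1/2)(Θ¹)²; Θ⁰_x = −2G_y + H_x + G·L − (1/2)H² − G·Θ¹ + (1/2)(Θ⁰)²; Θ¹_x = −(2/3)H_y + (1/3)L_x + 2G·M − (1/2)H·L − (1/2)H·Θ¹ + (1/2)L·Θ⁰ + (1/2)Θ⁰·Θ¹; Θ⁰_y = −(1/3)H_y + (2/3)L_x + 2G·M − (1/2)H·L − (1/2)H·Θ¹ + (1/2)L·Θ⁰ + (1/2)Θ⁰·Θ¹. Then at every point of U the functions G, H, L, M satisfy the second-order partial differential equation 0 = −2G_yy + (4/3)H_xy − (2/3)L_xx + 2(G·L)_y − 2G_x·M − 4G·M_x + (2/3)H·L_x − (4/3)H·H_y. -/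

import Mathlib

/-- Partial derivative in the `x`-direction of a function on `ℝ²`. -/
noncomputable def pdx (f : ℝ × ℝ → ℝ) : ℝ × ℝ → ℝ := fun p => fderiv ℝ f p (1, 0)

/-- Partial derivative in the `y`-direction of a function on `ℝ²`. -/
noncomputable def pdy (f : ℝ × ℝ → ℝ) : ℝ × ℝ → ℝ := fun p => fderiv ℝ f p (0, 1)

section helpers
variable {U : Set (ℝ × ℝ)} {f : ℝ × ℝ → ℝ} {p : ℝ × ℝ}

lemma my_diffAt (hU : IsOpen U) (hf : ContDiffOn ℝ 2 f U) (hp : p ∈ U) :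
    DifferentiableAt ℝ f p :=
  ((hf p hp).contDiffAt (hU.mem_nhds hp)).differentiableAt two_ne_zero

lemma my_diffAt_fderiv (hU : IsOpen U) (hf : ContDiffOn ℝ 2 f U) (hp : p ∈ U) :
    DifferentiableAt ℝ (fderiv ℝ f) p := by
  have h1 : ContDiffOn ℝ 1 (fderiv ℝ f) U := hf.fderiv_of_isOpen hU (by norm_num)
  exact ((h1 p hp).contDiffAt (hU.mem_nhds hp)).differentiableAt one_ne_zero

lemma my_diffAt_pd (hU : IsOpen U) (hf : ContDiffOn ℝ 2 f U) (hp : p ∈ U) (v : ℝ × ℝ) :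
    DifferentiableAt ℝ (fun q => fderiv ℝ f q v) p :=
  (my_diffAt_fderiv hU hf hp).clm_apply (differentiableAt_const v)

lemma my_diffAt_pdx (hU : IsOpen U) (hf : ContDiffOn ℝ 2 f U) (hp : p ∈ U) :
    DifferentiableAt ℝ (pdx f) p := my_diffAt_pd hU hf hp (1, 0)

lemma my_diffAt_pdy (hU : IsOpen U) (hf : ContDiffOn ℝ 2 f U) (hp : p ∈ U) :
    DifferentiableAt ℝ (pdy f) p := my_diffAt_pd hU hf hp (0, 1)

lemma my_pd_pd (hU : IsOpen U) (hf : ContDiffOn ℝ 2 f U) (hp : p ∈ U) (v w : ℝ × ℝ) :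
    fderiv ℝ (fun q => fderiv ℝ f q v) p w = fderiv ℝ (fderiv ℝ f) p w v := by
  have h1 : fderiv ℝ (fun q => fderiv ℝ f q v) p
      = (fderiv ℝ f p).comp (fderiv ℝ (fun _ : ℝ × ℝ => v) p)
        + (fderiv ℝ (fderiv ℝ f) p).flip v :=
    fderiv_clm_apply (my_diffAt_fderiv hU hf hp) (differentiableAt_const v)
  rw [h1]; simp

lemma my_pd_comm (hU : IsOpen U) (hf : ContDiffOn ℝ 2 f U) (hp : p ∈ U) :
    pdy (pdx f) p = pdx (pdy f) p := by
  have hsymm : IsSymmSndFDerivAt ℝ f p :=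
    ((hf p hp).contDiffAt (hU.mem_nhds hp)).isSymmSndFDerivAt (by simp [minSmoothness_of_isRCLikeNormedField])
  show fderiv ℝ (pdx f) p (0,1) = fderiv ℝ (pdy f) p (1,0)
  rw [show pdx f = fun q => fderiv ℝ f q (1,0) from rfl,
      show pdy f = fun q => fderiv ℝ f q (0,1) from rfl,
      my_pd_pd hU hf hp, my_pd_pd hU hf hp]
  exact hsymm _ _

end helpers

/-- If `G, H, L, M, Θ⁰, Θ¹` are C² functions on an open set `U ⊆ ℝ²` satisfying the
(complete) second auxiliary system of first-order equations, then `G, H, L, M`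
satisfy the first of Lie's two second-order partial differential equations. -/
theorem second_auxiliary_compatibility (U : Set (ℝ × ℝ)) (hU : IsOpen U)
    (G H L M Θ0 Θ1 : ℝ × ℝ → ℝ)
    (hG : ContDiffOn ℝ 2 G U) (hH : ContDiffOn ℝ 2 H U)
    (hL : ContDiffOn ℝ 2 L U) (hM : ContDiffOn ℝ 2 M U)
    (hΘ0 : ContDiffOn ℝ 2 Θ0 U) (hΘ1 : ContDiffOn ℝ 2 Θ1 U)
    (h1 : ∀ p ∈ U, pdy Θ1 p =
      -pdy L p + 2 * pdx M p + H p * M p - (1/2) * (L p)^2 + M p * Θ0 p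
        + (1/2) * (Θ1 p)^2)
    (h2 : ∀ p ∈ U, pdx Θ0 p =
      -2 * pdy G p + pdx H p + G p * L p - (1/2) * (H p)^2 - G p * Θ1 p
        + (1/2) * (Θ0 p)^2)
    (h3 : ∀ p ∈ U, pdx Θ1 p =
      -(2/3) * pdy H p + (1/3) * pdx L p + 2 * G p * M p - (1/2) * H p * L p
        - (1/2) * H p * Θ1 p + (1/2) * L p * Θ0 p + (1/2) * Θ0 p * Θ1 p)
    (h4 : ∀ p ∈ U, pdy Θ0 p =
      -(1/3) * pdy H p + (2/3) * pdx L p + 2 * G p * M p - (1/2) * H p * L p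
        - (1/2) * H p * Θ1 p + (1/2) * L p * Θ0 p + (1/2) * Θ0 p * Θ1 p) :
    ∀ p ∈ U, 0 =
      -2 * pdy (pdy G) p + (4/3) * pdy (pdx H) p - (2/3) * pdx (pdx L) p
        + 2 * pdy (fun z => G z * L z) p - 2 * pdx G p * M p - 4 * G p * pdx M p
        + (2/3) * H p * pdx L p - (4/3) * H p * pdy H p := by
  intro p hp
  have memU : U ∈ nhds p := hU.mem_nhds hp
  have hG' : HasFDerivAt G (fderiv ℝ G p) p := (my_diffAt hU hG hp).hasFDerivAt
  have hH' : HasFDerivAt H (fderiv ℝ H p) p := (my_diffAt hU hH hp).hasFDerivAt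
  have hL' : HasFDerivAt L (fderiv ℝ L p) p := (my_diffAt hU hL hp).hasFDerivAt
  have hM' : HasFDerivAt M (fderiv ℝ M p) p := (my_diffAt hU hM hp).hasFDerivAt
  have hT0' : HasFDerivAt Θ0 (fderiv ℝ Θ0 p) p := (my_diffAt hU hΘ0 hp).hasFDerivAt
  have hT1' : HasFDerivAt Θ1 (fderiv ℝ Θ1 p) p := (my_diffAt hU hΘ1 hp).hasFDerivAt
  have dGy' : HasFDerivAt (pdy G) (fderiv ℝ (pdy G) p) p :=
    (my_diffAt_pdy hU hG hp).hasFDerivAt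
  have dHx' : HasFDerivAt (pdx H) (fderiv ℝ (pdx H) p) p :=
    (my_diffAt_pdx hU hH hp).hasFDerivAt
  have dHy' : HasFDerivAt (pdy H) (fderiv ℝ (pdy H) p) p :=
    (my_diffAt_pdy hU hH hp).hasFDerivAt
  have dLx' : HasFDerivAt (pdx L) (fderiv ℝ (pdx L) p) p :=
    (my_diffAt_pdx hU hL hp).hasFDerivAt
  -- expansion of pdy (pdx Θ0) p via h2
  have heq2 : pdx Θ0 =ᶠ[nhds p] (fun z => -2 * pdy G z + pdx H z + G z * L z
      - 1/2 * (H z * H z) - G z * Θ1 z + 1/2 * (Θ0 z * Θ0 z)) :=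
    Filter.eventuallyEq_of_mem memU (fun q hq => by simp only [h2 q hq]; ring)
  have S2 : HasFDerivAt (fun z => -2 * pdy G z + pdx H z + G z * L z
      - 1/2 * (H z * H z) - G z * Θ1 z + 1/2 * (Θ0 z * Θ0 z))
      ((-2:ℝ) • fderiv ℝ (pdy G) p + fderiv ℝ (pdx H) p
        + (G p • fderiv ℝ L p + L p • fderiv ℝ G p)
        - (1/2:ℝ) • (H p • fderiv ℝ H p + H p • fderiv ℝ H p)
        - (G p • fderiv ℝ Θ1 p + Θ1 p • fderiv ℝ G p)
        + (1/2:ℝ) • (Θ0 p • fderiv ℝ Θ0 p + Θ0 p • fderiv ℝ Θ0 p)) p :=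
    (((((dGy'.const_mul (-2)).add dHx').add (hG'.mul hL')).sub
      ((hH'.mul hH').const_mul (1/2))).sub (hG'.mul hT1')).add
      ((hT0'.mul hT0').const_mul (1/2))
  have e2 : pdy (pdx Θ0) p = -2 * pdy (pdy G) p + pdy (pdx H) p
      + (G p * pdy L p + L p * pdy G p)
      - 1/2 * (H p * pdy H p + H p * pdy H p)
      - (G p * pdy Θ1 p + Θ1 p * pdy G p)
      + 1/2 * (Θ0 p * pdy Θ0 p + Θ0 p * pdy Θ0 p) := by
    show fderiv ℝ (pdx Θ0) p (0, 1) = _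
    rw [heq2.fderiv_eq, S2.fderiv]
    simp only [ContinuousLinearMap.add_apply, ContinuousLinearMap.sub_apply,
      ContinuousLinearMap.smul_apply, smul_eq_mul, pdx, pdy]
  -- expansion of pdx (pdy Θ0) p via h4
  have heq4 : pdy Θ0 =ᶠ[nhds p] (fun z => -(1/3) * pdy H z + 2/3 * pdx L z
      + 2 * (G z * M z) - 1/2 * (H z * L z) - 1/2 * (H z * Θ1 z)
      + 1/2 * (L z * Θ0 z) + 1/2 * (Θ0 z * Θ1 z)) :=
    Filter.eventuallyEq_of_mem memU (fun q hq => by simp only [h4 q hq]; ring)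
  have S4 : HasFDerivAt (fun z => -(1/3) * pdy H z + 2/3 * pdx L z
      + 2 * (G z * M z) - 1/2 * (H z * L z) - 1/2 * (H z * Θ1 z)
      + 1/2 * (L z * Θ0 z) + 1/2 * (Θ0 z * Θ1 z))
      ((-(1/3):ℝ) • fderiv ℝ (pdy H) p + (2/3:ℝ) • fderiv ℝ (pdx L) p
        + (2:ℝ) • (G p • fderiv ℝ M p + M p • fderiv ℝ G p)
        - (1/2:ℝ) • (H p • fderiv ℝ L p + L p • fderiv ℝ H p)
        - (1/2:ℝ) • (H p • fderiv ℝ Θ1 p + Θ1 p • fderiv ℝ H p)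
        + (1/2:ℝ) • (L p • fderiv ℝ Θ0 p + Θ0 p • fderiv ℝ L p)
        + (1/2:ℝ) • (Θ0 p • fderiv ℝ Θ1 p + Θ1 p • fderiv ℝ Θ0 p)) p :=
    ((((((dHy'.const_mul (-(1/3))).add (dLx'.const_mul (2/3))).add
      ((hG'.mul hM').const_mul 2)).sub ((hH'.mul hL').const_mul (1/2))).sub
      ((hH'.mul hT1').const_mul (1/2))).add ((hL'.mul hT0').const_mul (1/2))).add
      ((hT0'.mul hT1').const_mul (1/2))
  have e4 : pdx (pdy Θ0) p = -(1/3) * pdx (pdy H) p + 2/3 * pdx (pdx L) p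
      + 2 * (G p * pdx M p + M p * pdx G p)
      - 1/2 * (H p * pdx L p + L p * pdx H p)
      - 1/2 * (H p * pdx Θ1 p + Θ1 p * pdx H p)
      + 1/2 * (L p * pdx Θ0 p + Θ0 p * pdx L p)
      + 1/2 * (Θ0 p * pdx Θ1 p + Θ1 p * pdx Θ0 p) := by
    show fderiv ℝ (pdy Θ0) p (1, 0) = _
    rw [heq4.fderiv_eq, S4.fderiv]
    simp only [ContinuousLinearMap.add_apply, ContinuousLinearMap.sub_apply,
      ContinuousLinearMap.smul_apply, smul_eq_mul, pdx, pdy]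
  have comm0 : pdy (pdx Θ0) p = pdx (pdy Θ0) p := my_pd_comm hU hΘ0 hp
  have commH : pdy (pdx H) p = pdx (pdy H) p := my_pd_comm hU hH hp
  have eGL : pdy (fun z => G z * L z) p = G p * pdy L p + L p * pdy G p := by
    show fderiv ℝ (fun z => G z * L z) p (0, 1) = _
    rw [show fderiv ℝ (fun z => G z * L z) p = _ from (hG'.mul hL').fderiv]
    simp [pdy]
  have E := e2.symm.trans (comm0.trans e4)
  rw [h1 p hp, h2 p hp, h3 p hp, h4 p hp, ← commH] at E
  rw [eGL]
  linear_combination -E
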